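/- arXiv:2212.08177 — 2 statements merged into one kernel-verified Lean document; each statement's English description precedes it below -/
import Mathlib

section
/- β-reduction of the Functional Machine Calculus is confluent: if a term M β-reduces in zero or more steps to N and also to P, then there exists a term Q such that N and P each β-reduce in zero or more steps to Q. -/
/-- Terms of the Functional Machine Calculus over a set `A` of locations,
in de Bruijn representation (so terms are automatically identified up to
α-equivalence): nil, variable prefix, push/application on a location,
and pop/abstraction on a location. -/
inductive Tm (A : Type) : Type
  | star : Tm A
  | var  : Nat → Tm A → Tm A
  | push : Tm A → A → Tm A → Tm A
  | pop  : A → Tm A → Tm A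

namespace Tm

variable {A : Type}

/-- Lifting of a renaming under a binder. -/
def liftF (f : Nat → Nat) : Nat → Nat
  | 0 => 0
  | n+1 => f n + 1

/-- Renaming of de Bruijn indices. -/
def rename (f : Nat → Nat) : Tm A → Tm A
  | star => star
  | var n M => var (f n) (rename f M)
  | push N a M => push (rename f N) a (rename f M)
  | pop a M => pop a (rename (liftF f) M)

/-- Capture-avoiding composition `N ; M`. -/
def comp : Tm A → Tm A → Tm A
  | star, P => P
  | var n N, P => var n (comp N P)
  | push Q a N, P => push Q a (comp N P)
  | pop a N, P => pop a (comp N (rename Nat.succ P))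

/-- Lifting of a substitution under a binder. -/
def liftS (σ : Nat → Tm A) : Nat → Tm A
  | 0 => var 0 star
  | n+1 => rename Nat.succ (σ n)

/-- Capture-avoiding simultaneous substitution; note
`{N/x}(x.M) = N ; {N/x}M`. -/
def subst (σ : Nat → Tm A) : Tm A → Tm A
  | star => star
  | var n M => comp (σ n) (subst σ M)
  | push N a M => push (subst σ N) a (subst σ M)
  | pop a M => pop a (subst (liftS σ) M)

/-- Capture-avoiding substitution `{N/x}M` of `N` for the variable
bound immediately outside `M`. -/
def subst1 (N : Tm A) : Tm A → Tm A :=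
  subst (fun n => match n with | 0 => N | n+1 => var n star)

/-- the substitution underlying subst1 -/
def sub1 (N : Tm A) : Nat → Tm A :=
  fun n => match n with | 0 => N | n+1 => var n star

theorem subst1_eq (N : Tm A) (M : Tm A) : subst1 N M = subst (sub1 N) M := rfl

@[simp] theorem liftF_zero (f : Nat → Nat) : liftF f 0 = 0 := rfl
@[simp] theorem liftF_succ (f : Nat → Nat) (n : Nat) : liftF f (n+1) = f n + 1 := rfl
@[simp] theorem liftS_zero (σ : Nat → Tm A) : liftS σ 0 = var 0 star := rfl
@[simp] theorem liftS_succ (σ : Nat → Tm A) (n : Nat) : liftS σ (n+1) = rename Nat.succ (σ n) := rfl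
@[simp] theorem sub1_zero (N : Tm A) : sub1 N 0 = N := rfl
@[simp] theorem sub1_succ (N : Tm A) (n : Nat) : sub1 N (n+1) = var n star := rfl

theorem rename_congr {f g : Nat → Nat} (h : ∀ n, f n = g n) (M : Tm A) :
    rename f M = rename g M := by
  induction M generalizing f g with
  | star => rfl
  | var n M ih => simp [rename, h, ih h]
  | push N a M ihN ihM => simp [rename, ihN h, ihM h]
  | pop a M ih =>
      simp only [rename]
      rw [ih (f := liftF f) (g := liftF g)]
      intro n; cases n <;> simp [h]

theorem rename_id {f : Nat → Nat} (h : ∀ n, f n = n) (M : Tm A) : rename f M = M := by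
  induction M generalizing f with
  | star => rfl
  | var n M ih => simp [rename, h, ih h]
  | push N a M ihN ihM => simp [rename, ihN h, ihM h]
  | pop a M ih =>
      simp only [rename, pop.injEq, true_and]
      apply ih; intro n; cases n <;> simp [h]

theorem rename_rename (f g : Nat → Nat) (M : Tm A) :
    rename f (rename g M) = rename (fun n => f (g n)) M := by
  induction M generalizing f g with
  | star => rfl
  | var n M ih => simp [rename, ih]
  | push N a M ihN ihM => simp [rename, ihN, ihM]
  | pop a M ih =>
      simp only [rename, pop.injEq, true_and]
      rw [ih]
      apply rename_congr
      intro n; cases n <;> simp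

theorem rename_comp (f : Nat → Nat) (M N : Tm A) :
    rename f (comp M N) = comp (rename f M) (rename f N) := by
  induction M generalizing f N with
  | star => rfl
  | var n M ih => simp [comp, rename, ih]
  | push Q a M ihQ ihM => simp [comp, rename, ihM]
  | pop a M ih =>
      simp only [comp, rename, pop.injEq, true_and]
      rw [ih, rename_rename, rename_rename]
      exact congrArg _ (rename_congr (fun n => rfl) N)

theorem subst_congr {σ τ : Nat → Tm A} (h : ∀ n, σ n = τ n) (M : Tm A) :
    subst σ M = subst τ M := by
  induction M generalizing σ τ with
  | star => rfl
  | var n M ih => simp [subst, h, ih h]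
  | push N a M ihN ihM => simp [subst, ihN h, ihM h]
  | pop a M ih =>
      simp only [subst, pop.injEq, true_and]
      apply ih; intro n; cases n <;> simp [h]

theorem subst_rename (σ : Nat → Tm A) (f : Nat → Nat) (M : Tm A) :
    subst σ (rename f M) = subst (fun n => σ (f n)) M := by
  induction M generalizing σ f with
  | star => rfl
  | var n M ih => simp [subst, rename, ih]
  | push N a M ihN ihM => simp [subst, rename, ihN, ihM]
  | pop a M ih =>
      simp only [subst, rename, pop.injEq, true_and]
      rw [ih]
      apply subst_congr
      intro n; cases n <;> simp

theorem rename_subst (f : Nat → Nat) (σ : Nat → Tm A) (M : Tm A) :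
    rename f (subst σ M) = subst (fun n => rename f (σ n)) M := by
  induction M generalizing f σ with
  | star => rfl
  | var n M ih => simp [subst, rename, rename_comp, ih]
  | push N a M ihN ihM => simp [subst, rename, ihN, ihM]
  | pop a M ih =>
      simp only [subst, rename, pop.injEq, true_and]
      rw [ih]
      apply subst_congr
      intro n; cases n with
      | zero => simp [rename]
      | succ n =>
          simp only [liftS_succ]
          rw [rename_rename, rename_rename]
          exact rename_congr (fun m => rfl) _

theorem comp_assoc (M N P : Tm A) : comp (comp M N) P = comp M (comp N P) := by
  induction M generalizing N P with
  | star => rfl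
  | var n M ih => simp [comp, ih]
  | push Q a M ihQ ihM => simp [comp, ihM]
  | pop a M ih => simp [comp, ih, rename_comp]

theorem subst_comp (σ : Nat → Tm A) (M N : Tm A) :
    subst σ (comp M N) = comp (subst σ M) (subst σ N) := by
  induction M generalizing σ N with
  | star => rfl
  | var n M ih => simp only [comp, subst, ih]; rw [comp_assoc]
  | push Q a M ihQ ihM => simp [comp, subst, ihM]
  | pop a M ih =>
      simp only [comp, subst, pop.injEq, true_and]
      rw [ih, subst_rename, rename_subst]
      exact congrArg _ (subst_congr (fun n => rfl) N)

theorem comp_star (M : Tm A) : comp M star = M := by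
  induction M with
  | star => rfl
  | var n M ih => simp [comp, ih]
  | push Q a M ihQ ihM => simp [comp, ihM]
  | pop a M ih => simpa [comp, rename] using ih

theorem subst_id {σ : Nat → Tm A} (h : ∀ n, σ n = var n star) (M : Tm A) :
    subst σ M = M := by
  induction M generalizing σ with
  | star => rfl
  | var n M ih => simp [subst, h, comp, ih h]
  | push N a M ihN ihM => simp [subst, ihN h, ihM h]
  | pop a M ih =>
      simp only [subst, pop.injEq, true_and]
      apply ih; intro n; cases n <;> simp [h, rename]

theorem subst_subst (τ σ : Nat → Tm A) (M : Tm A) :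
    subst τ (subst σ M) = subst (fun n => subst τ (σ n)) M := by
  induction M generalizing τ σ with
  | star => rfl
  | var n M ih => simp [subst, subst_comp, ih]
  | push N a M ihN ihM => simp [subst, ihN, ihM]
  | pop a M ih =>
      simp only [subst, pop.injEq, true_and]
      rw [ih]
      apply subst_congr
      intro n; cases n with
      | zero => simp [subst, comp]
      | succ n =>
          simp only [liftS_succ]
          rw [subst_rename, rename_subst]
          exact subst_congr (fun m => rfl) (σ n)

theorem subst_var (f : Nat → Nat) (M : Tm A) :
    subst (fun n => var (f n) star) M = rename f M := by
  induction M generalizing f with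
  | star => rfl
  | var n M ih => simp [subst, rename, comp, ih]
  | push N a M ihN ihM => simp [subst, rename, ihN, ihM]
  | pop a M ih =>
      simp only [subst, rename, pop.injEq, true_and]
      rw [← ih (f := liftF f)]
      apply subst_congr
      intro n; cases n <;> simp [rename]

theorem subst_subst1 (σ : Nat → Tm A) (W M : Tm A) :
    subst σ (subst1 W M) = subst1 (subst σ W) (subst (liftS σ) M) := by
  rw [subst1_eq, subst1_eq, subst_subst, subst_subst]
  apply subst_congr
  intro n; cases n with
  | zero => simp [subst, comp_star]
  | succ n =>
      simp only [sub1_succ, liftS_succ, subst, comp_star, subst_rename]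
      rw [subst_id (fun m => rfl) (σ n)]

end Tm

/-- Head contexts `H ::= {} | [M]a.H | a<x>.H`. -/
inductive Hd (A : Type) : Type
  | hole : Hd A
  | push : Tm A → A → Hd A → Hd A
  | pop  : A → Hd A → Hd A

namespace Hd

variable {A : Type}

/-- Plugging a term into the hole of a head context (binders of `H` capture). -/
def plug : Hd A → Tm A → Tm A
  | hole, M => M
  | push N a H, M => Tm.push N a (plug H M)
  | pop a H, M => Tm.pop a (plug H M)

/-- The number of binders of a head context. -/
def binders : Hd A → Nat
  | hole => 0
  | push _ _ H => binders H
  | pop _ H => binders H + 1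

/-- The locations occurring along the spine of a head context. -/
def locs : Hd A → List A
  | hole => []
  | push _ a H => a :: locs H
  | pop a H => a :: locs H

/-- append of head contexts -/
def happ : Hd A → Hd A → Hd A
  | hole, G => G
  | push N a H, G => push N a (happ H G)
  | pop a H, G => pop a (happ H G)

@[simp] theorem plug_happ (H G : Hd A) (M : Tm A) :
    (happ H G).plug M = H.plug (G.plug M) := by
  induction H <;> simp [happ, plug, *]

@[simp] theorem binders_happ (H G : Hd A) :
    (happ H G).binders = H.binders + G.binders := by
  induction H <;> simp [happ, binders, *] <;> omega

@[simp] theorem locs_happ (H G : Hd A) :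
    (happ H G).locs = H.locs ++ G.locs := by
  induction H <;> simp [happ, locs, *]

/-- renaming of a head context -/
def renameH (f : Nat → Nat) : Hd A → Hd A
  | hole => hole
  | push N a H => push (Tm.rename f N) a (renameH f H)
  | pop a H => pop a (renameH (Tm.liftF f) H)

/-- substitution on a head context -/
def substH (σ : Nat → Tm A) : Hd A → Hd A
  | hole => hole
  | push N a H => push (Tm.subst σ N) a (substH σ H)
  | pop a H => pop a (substH (Tm.liftS σ) H)

@[simp] theorem binders_renameH (f : Nat → Nat) (H : Hd A) :
    (renameH f H).binders = H.binders := by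
  induction H generalizing f <;> simp [renameH, binders, *]

@[simp] theorem locs_renameH (f : Nat → Nat) (H : Hd A) :
    (renameH f H).locs = H.locs := by
  induction H generalizing f <;> simp [renameH, locs, *]

@[simp] theorem binders_substH (σ : Nat → Tm A) (H : Hd A) :
    (substH σ H).binders = H.binders := by
  induction H generalizing σ <;> simp [substH, binders, *]

@[simp] theorem locs_substH (σ : Nat → Tm A) (H : Hd A) :
    (substH σ H).locs = H.locs := by
  induction H generalizing σ <;> simp [substH, locs, *]

theorem plug_rename (f : Nat → Nat) (H : Hd A) (Z : Tm A) :
    Tm.rename f (H.plug Z) = (renameH f H).plug (Tm.rename (Tm.liftF^[H.binders] f) Z) := by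
  induction H generalizing f with
  | hole => simp [plug, renameH, binders]
  | push N a H ih => simp [plug, renameH, binders, Tm.rename, ih]
  | pop a H ih =>
      simp only [plug, renameH, binders, Tm.rename, ih]
      rw [Function.iterate_succ_apply]

theorem plug_subst (σ : Nat → Tm A) (H : Hd A) (Z : Tm A) :
    Tm.subst σ (H.plug Z) = (substH σ H).plug (Tm.subst (Tm.liftS^[H.binders] σ) Z) := by
  induction H generalizing σ with
  | hole => simp [plug, substH, binders]
  | push N a H ih => simp [plug, substH, binders, Tm.subst, ih]
  | pop a H ih =>
      simp only [plug, substH, binders, Tm.subst, ih]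
      rw [Function.iterate_succ_apply]

theorem comp_plug (H : Hd A) (Z R : Tm A) :
    Tm.comp (H.plug Z) R = H.plug (Tm.comp Z (Tm.rename (· + H.binders) R)) := by
  induction H generalizing R with
  | hole =>
      simp only [plug, binders]
      exact congrArg _ (Tm.rename_id (fun n => rfl) R).symm
  | push N a H ih => simp [plug, binders, Tm.comp, ih]
  | pop a H ih =>
      have h : Tm.rename (· + H.binders) (Tm.rename Nat.succ R) = Tm.rename (· + (H.binders + 1)) R := by
        rw [Tm.rename_rename]; exact Tm.rename_congr (fun n => by omega) R
      simp only [plug, binders, Tm.comp, ih, h]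

end Hd

namespace Tm

variable {A : Type}

theorem liftF_iter_add (k : Nat) (f : Nat → Nat) (n : Nat) :
    liftF^[k] f (n + k) = f n + k := by
  induction k with
  | zero => rfl
  | succ k ih =>
      rw [Function.iterate_succ_apply']
      show liftF (liftF^[k] f) (n + k + 1) = f n + (k+1)
      simp [ih]
      omega

theorem liftF_iter_lt (k : Nat) (f : Nat → Nat) {m : Nat} (h : m < k) :
    liftF^[k] f m = m := by
  induction k generalizing m with
  | zero => omega
  | succ k ih =>
      rw [Function.iterate_succ_apply']
      cases m with
      | zero => rfl
      | succ m =>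
          show liftF^[k] f m + 1 = m + 1
          rw [ih (Nat.lt_of_succ_lt_succ h)]

theorem liftS_iter_add (k : Nat) (σ : Nat → Tm A) (n : Nat) :
    liftS^[k] σ (n + k) = rename (· + k) (σ n) := by
  induction k with
  | zero => exact (rename_id (fun n => rfl) _).symm
  | succ k ih =>
      rw [Function.iterate_succ_apply']
      show rename Nat.succ (liftS^[k] σ (n + k)) = _
      rw [ih, rename_rename]
      exact rename_congr (fun m => by omega) _

theorem liftS_iter_lt (k : Nat) (σ : Nat → Tm A) {m : Nat} (h : m < k) :
    liftS^[k] σ m = var m star := by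
  induction k generalizing m with
  | zero => omega
  | succ k ih =>
      rw [Function.iterate_succ_apply']
      cases m with
      | zero => rfl
      | succ m =>
          show rename Nat.succ (liftS^[k] σ m) = _
          rw [ih (Nat.lt_of_succ_lt_succ h)]
          simp [rename]

/-- key commuting identity: a lifted single substitution acts trivially on a
sufficiently shifted term -/
theorem subst_lift_sub1_rename (W V : Tm A) (j k : Nat) :
    subst (liftS^[k] (sub1 W)) (rename (fun n => n + (j+1+k)) V) = rename (fun n => n + (j+k)) V := by
  rw [subst_rename]
  rw [← subst_var (fun n => n + (j+k)) V]
  apply subst_congr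
  intro n
  have h1 : n + (j+1+k) = (n + j + 1) + k := by omega
  rw [h1, liftS_iter_add]
  show rename _ (var (n+j) star) = _
  simp [rename]
  omega

theorem fire_subst (W V Y : Tm A) (j k : Nat) :
    subst (liftS^[k] (sub1 W)) (subst1 (rename (fun n => n + (j+1+k)) V) Y)
      = subst1 (rename (fun n => n + (j+k)) V) (subst (liftS^[k+1] (sub1 W)) Y) := by
  rw [subst_subst1, subst_lift_sub1_rename]
  congr 1
  rw [← Function.iterate_succ_apply' liftS]

theorem rename_shift_subst1 (f : Nat → Nat) (V K : Tm A) (b : Nat) :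
    rename (liftF^[b] f) (subst1 (rename (· + b) V) K)
      = subst1 (rename (· + b) (rename f V)) (rename (liftF^[b+1] f) K) := by
  rw [subst1_eq, subst1_eq, rename_subst, subst_rename]
  apply subst_congr
  intro n
  cases n with
  | zero =>
      show rename (liftF^[b] f) (rename (· + b) V) = sub1 _ (liftF^[b+1] f 0)
      rw [liftF_iter_lt (b+1) f (by omega)]
      show _ = rename (· + b) (rename f V)
      rw [rename_rename, rename_rename]
      exact rename_congr (fun n => liftF_iter_add b f n) V
  | succ n =>
      show rename (liftF^[b] f) (var n star) = sub1 _ (liftF^[b+1] f (n+1))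
      rw [Function.iterate_succ_apply' liftF]
      show _ = sub1 _ (liftF^[b] f n + 1)
      simp [rename]

theorem subst_shift_subst1 (σ : Nat → Tm A) (V K : Tm A) (b : Nat) :
    subst (liftS^[b] σ) (subst1 (rename (· + b) V) K)
      = subst1 (rename (· + b) (subst σ V)) (subst (liftS^[b+1] σ) K) := by
  rw [subst_subst1]
  congr 1
  · rw [subst_rename, rename_subst]
    apply subst_congr
    intro n
    exact liftS_iter_add b σ n
  · rw [← Function.iterate_succ_apply' liftS]

theorem comp_subst1 (W K R : Tm A) :
    comp (subst1 W K) R = subst1 W (comp K (rename Nat.succ R)) := by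
  rw [subst1_eq, subst1_eq, subst_comp, subst_rename]
  congr 1
  exact (subst_id (fun n => rfl) R).symm

end Tm

namespace Hd

variable {A : Type}

theorem decomp_unique {a : A} : ∀ (H₁ : Hd A) (H₂ : Hd A) (M₁ M₂ : Tm A),
    H₁.plug (Tm.pop a M₁) = H₂.plug (Tm.pop a M₂) → a ∉ H₁.locs → a ∉ H₂.locs →
    H₁ = H₂ ∧ M₁ = M₂ := by
  intro H₁
  induction H₁ with
  | hole =>
      intro H₂ M₁ M₂ h h₁ h₂
      cases H₂ with
      | hole => simpa [plug] using h
      | push Q d H => simp [plug] at h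
      | pop d H =>
          simp only [plug, Tm.pop.injEq] at h
          exact absurd (h.1 ▸ h₂) (by simp [locs])
  | push P c H₁ ih =>
      intro H₂ M₁ M₂ h h₁ h₂
      cases H₂ with
      | hole => simp [plug] at h
      | push Q d H =>
          simp only [plug, Tm.push.injEq] at h
          obtain ⟨rfl, rfl, h⟩ := h
          obtain ⟨rfl, rfl⟩ := ih H M₁ M₂ h (by simp [locs] at h₁; exact h₁.2)
            (by simp [locs] at h₂; exact h₂.2)
          exact ⟨rfl, rfl⟩
      | pop d H => simp [plug] at h
  | pop c H₁ ih =>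
      intro H₂ M₁ M₂ h h₁ h₂
      cases H₂ with
      | hole =>
          simp only [plug, Tm.pop.injEq] at h
          exact absurd (h.1 ▸ h₁) (by simp [locs])
      | push Q d H => simp [plug] at h
      | pop d H =>
          simp only [plug, Tm.pop.injEq] at h
          obtain ⟨rfl, h⟩ := h
          obtain ⟨rfl, rfl⟩ := ih H M₁ M₂ h (by simp [locs] at h₁; exact h₁.2)
            (by simp [locs] at h₂; exact h₂.2)
          exact ⟨rfl, rfl⟩

theorem decomp_two {a b : A} (hab : a ≠ b) : ∀ (H₁ : Hd A) (H₂ : Hd A) (M₁ M₂ : Tm A),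
    H₁.plug (Tm.pop a M₁) = H₂.plug (Tm.pop b M₂) → a ∉ H₁.locs → b ∉ H₂.locs →
    (∃ G, H₂ = Hd.happ H₁ (Hd.pop a G) ∧ M₁ = G.plug (Tm.pop b M₂)) ∨
    (∃ G, H₁ = Hd.happ H₂ (Hd.pop b G) ∧ M₂ = G.plug (Tm.pop a M₁)) := by
  intro H₁
  induction H₁ with
  | hole =>
      intro H₂ M₁ M₂ h h₁ h₂
      cases H₂ with
      | hole =>
          simp only [plug, Tm.pop.injEq] at h
          exact absurd h.1 hab
      | push Q d H => simp [plug] at h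
      | pop d H =>
          simp only [plug, Tm.pop.injEq] at h
          obtain ⟨rfl, h⟩ := h
          exact Or.inl ⟨H, rfl, h⟩
  | push P c H₁ ih =>
      intro H₂ M₁ M₂ h h₁ h₂
      cases H₂ with
      | hole => simp [plug] at h
      | push Q d H =>
          simp only [plug, Tm.push.injEq] at h
          obtain ⟨rfl, rfl, h⟩ := h
          rcases ih H M₁ M₂ h (by simp [locs] at h₁; exact h₁.2)
              (by simp [locs] at h₂; exact h₂.2) with ⟨G, rfl, hM⟩ | ⟨G, rfl, hM⟩
          · exact Or.inl ⟨G, rfl, hM⟩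
          · exact Or.inr ⟨G, rfl, hM⟩
      | pop d H => simp [plug] at h
  | pop c H₁ ih =>
      intro H₂ M₁ M₂ h h₁ h₂
      cases H₂ with
      | hole =>
          simp only [plug, Tm.pop.injEq] at h
          obtain ⟨rfl, h⟩ := h
          exact Or.inr ⟨H₁, rfl, h.symm⟩
      | push Q d H => simp [plug] at h
      | pop d H =>
          simp only [plug, Tm.pop.injEq] at h
          obtain ⟨rfl, h⟩ := h
          rcases ih H M₁ M₂ h (by simp [locs] at h₁; exact h₁.2)
              (by simp [locs] at h₂; exact h₂.2) with ⟨G, rfl, hM⟩ | ⟨G, rfl, hM⟩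
          · exact Or.inl ⟨G, rfl, hM⟩
          · exact Or.inr ⟨G, rfl, hM⟩

end Hd

/-- β-reduction of the FMC: `[N]a.H.a<x>.M → H.{N/x}M` where the location `a`
does not occur in `H` (in de Bruijn style no binding variable of `H` can
capture in `N`, which is shifted by the number of binders of `H`),
closed under all contexts. -/
inductive Step {A : Type} : Tm A → Tm A → Prop
  | beta (N : Tm A) (a : A) (H : Hd A) (M : Tm A) (h : a ∉ H.locs) :
      Step (Tm.push N a (H.plug (Tm.pop a M)))
           (H.plug (Tm.subst1 (Tm.rename (· + H.binders) N) M))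
  | var {M M' : Tm A} (n : Nat) : Step M M' → Step (Tm.var n M) (Tm.var n M')
  | pushL {M M' : Tm A} (N : Tm A) (a : A) : Step M M' → Step (Tm.push N a M) (Tm.push N a M')
  | pushArg {N N' : Tm A} (a : A) (M : Tm A) : Step N N' → Step (Tm.push N a M) (Tm.push N' a M)
  | pop {M M' : Tm A} (a : A) : Step M M' → Step (Tm.pop a M) (Tm.pop a M')

/-- Parallel reduction with deep β firing. -/
inductive Par {A : Type} : Tm A → Tm A → Prop
  | star : Par Tm.star Tm.star
  | var {M M' : Tm A} (n : Nat) : Par M M' → Par (Tm.var n M) (Tm.var n M')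
  | push {N N' M M' : Tm A} (a : A) : Par N N' → Par M M' →
      Par (Tm.push N a M) (Tm.push N' a M')
  | pop {M M' : Tm A} (a : A) : Par M M' → Par (Tm.pop a M) (Tm.pop a M')
  | beta {N N' M K : Tm A} (a : A) (H : Hd A) : Par N N' → Par M (H.plug (Tm.pop a K)) →
      a ∉ H.locs →
      Par (Tm.push N a M) (H.plug (Tm.subst1 (Tm.rename (· + H.binders) N') K))

namespace Par

variable {A : Type}

theorem refl (M : Tm A) : Par M M := by
  induction M with
  | star => exact Par.star
  | var n M ih => exact Par.var n ih
  | push N a M ihN ihM => exact Par.push a ihN ihM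
  | pop a M ih => exact Par.pop a ih

theorem rename {M M' : Tm A} (h : Par M M') (f : Nat → Nat) :
    Par (Tm.rename f M) (Tm.rename f M') := by
  induction h generalizing f with
  | star => exact Par.star
  | var n _ ih => simp only [Tm.rename]; exact Par.var (f n) (ih f)
  | push a _ _ ihN ihM => simp only [Tm.rename]; exact Par.push a (ihN f) (ihM f)
  | pop a _ ih => simp only [Tm.rename]; exact Par.pop a (ih (Tm.liftF f))
  | @beta N N' M K a H hN hM hfr ihN ihM =>
      show Par (Tm.push (Tm.rename f N) a (Tm.rename f M)) _
      rw [Hd.plug_rename, Tm.rename_shift_subst1]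
      have hM' : Par (Tm.rename f M)
          ((Hd.renameH f H).plug (Tm.pop a (Tm.rename (Tm.liftF^[H.binders + 1] f) K))) := by
        have := ihM f
        rwa [Hd.plug_rename, show Tm.rename (Tm.liftF^[H.binders] f) (Tm.pop a K)
            = Tm.pop a (Tm.rename (Tm.liftF^[H.binders + 1] f) K) by
          simp [Tm.rename, Function.iterate_succ_apply' Tm.liftF]] at this
      have := Par.beta a (Hd.renameH f H) (ihN f) hM' (by simpa using hfr)
      simpa using this

theorem comp {M M' : Tm A} (h : Par M M') : ∀ {Q Q' : Tm A}, Par Q Q' →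
    Par (Tm.comp M Q) (Tm.comp M' Q') := by
  induction h with
  | star => intro Q Q' hQ; exact hQ
  | var n _ ih => intro Q Q' hQ; exact Par.var n (ih hQ)
  | push a hN _ ihN ihM => intro Q Q' hQ; exact Par.push a hN (ihM hQ)
  | pop a _ ih => intro Q Q' hQ; exact Par.pop a (ih (hQ.rename Nat.succ))
  | @beta N N' M K a H hN hM hfr ihN ihM =>
      intro Q Q' hQ
      show Par (Tm.push N a (Tm.comp M Q)) _
      rw [Hd.comp_plug, Tm.comp_subst1]
      have hM' := ihM hQ
      rw [Hd.comp_plug] at hM'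
      simp only [Tm.comp] at hM'
      exact Par.beta a H hN hM' hfr

theorem subst {M M' : Tm A} (h : Par M M') : ∀ {σ σ' : Nat → Tm A},
    (∀ n, Par (σ n) (σ' n)) → Par (Tm.subst σ M) (Tm.subst σ' M') := by
  induction h with
  | star => intro σ σ' hσ; exact Par.star
  | var n _ ih => intro σ σ' hσ; exact Par.comp (hσ n) (ih hσ)
  | push a _ _ ihN ihM => intro σ σ' hσ; exact Par.push a (ihN hσ) (ihM hσ)
  | pop a _ ih =>
      intro σ σ' hσ
      refine Par.pop a (ih ?_)
      intro n; cases n with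
      | zero => exact Par.refl _
      | succ n => exact (hσ n).rename Nat.succ
  | @beta N N' M K a H hN hM hfr ihN ihM =>
      intro σ σ' hσ
      show Par (Tm.push (Tm.subst σ N) a (Tm.subst σ M)) _
      rw [Hd.plug_subst, Tm.subst_shift_subst1]
      have hliftn : ∀ (k : Nat) (σ σ' : Nat → Tm A), (∀ n, Par (σ n) (σ' n)) →
          ∀ n, Par (Tm.liftS^[k] σ n) (Tm.liftS^[k] σ' n) := by
        intro k
        induction k with
        | zero => intro σ σ' hσ n; exact hσ n
        | succ k ihk =>
            intro σ σ' hσ n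
            rw [Function.iterate_succ_apply' Tm.liftS, Function.iterate_succ_apply' Tm.liftS]
            cases n with
            | zero => exact Par.refl _
            | succ n => exact (ihk σ σ' hσ n).rename Nat.succ
      have hM' : Par (Tm.subst σ M)
          ((Hd.substH σ' H).plug (Tm.pop a (Tm.subst (Tm.liftS^[H.binders + 1] σ') K))) := by
        have := ihM hσ
        rwa [Hd.plug_subst, show Tm.subst (Tm.liftS^[H.binders] σ') (Tm.pop a K)
            = Tm.pop a (Tm.subst (Tm.liftS^[H.binders + 1] σ') K) by
          simp [Tm.subst, Function.iterate_succ_apply' Tm.liftS]] at this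
      have := Par.beta a (Hd.substH σ' H) (ihN hσ) hM' (by simpa using hfr)
      simpa using this

theorem subst1 {N N' M M' : Tm A} (hN : Par N N') (hM : Par M M') :
    Par (Tm.subst1 N M) (Tm.subst1 N' M') := by
  rw [Tm.subst1_eq, Tm.subst1_eq]
  refine hM.subst ?_
  intro n; cases n with
  | zero => exact hN
  | succ n => exact Par.refl _

end Par

namespace Par

variable {A : Type}

theorem fire {a : A} : ∀ {T Z : Tm A}, Par T Z →
    ∀ (H : Hd A) (K N N' : Tm A), T = H.plug (Tm.pop a K) → a ∉ H.locs → Par N N' →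
    ∃ (H' : Hd A) (K' : Tm A), Z = H'.plug (Tm.pop a K') ∧ a ∉ H'.locs ∧
      Par (H.plug (Tm.subst1 (Tm.rename (· + H.binders) N) K))
          (H'.plug (Tm.subst1 (Tm.rename (· + H'.binders) N') K')) := by
  intro T Z h
  induction h with
  | star =>
      intro H K N N' hT hfr hN
      cases H <;> simp [Hd.plug] at hT
  | var n hM ih =>
      intro H K N N' hT hfr hN
      cases H <;> simp [Hd.plug] at hT
  | @pop M M' c hM ih =>
      intro H K N N' hT hfr hN
      cases H with
      | push Q d H₀ => simp [Hd.plug] at hT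
      | hole =>
          simp only [Hd.plug, Tm.pop.injEq] at hT
          obtain ⟨rfl, rfl⟩ := hT
          refine ⟨Hd.hole, M', rfl, by simp [Hd.locs], ?_⟩

          simp only [Hd.plug, Hd.binders]
          have e0 : ∀ X : Tm A, Tm.rename (· + 0) X = X := fun X => Tm.rename_id (fun n => rfl) X
          rw [e0, e0]
          exact Par.subst1 hN hM
      | pop d H₀ =>
          simp only [Hd.plug, Tm.pop.injEq] at hT
          obtain ⟨rfl, rfl⟩ := hT
          simp only [Hd.locs, List.mem_cons, not_or] at hfr
          obtain ⟨had, hfr₀⟩ := hfr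
          obtain ⟨H₀', K', rfl, hfr', hPar⟩ :=
            ih H₀ K (Tm.rename Nat.succ N) (Tm.rename Nat.succ N') rfl hfr₀ (hN.rename Nat.succ)
          refine ⟨Hd.pop c H₀', K', rfl, by simp only [Hd.locs, List.mem_cons, not_or]; exact ⟨had, hfr'⟩, ?_⟩
          have e : ∀ (X : Tm A) (b : Nat),
              Tm.rename (· + b) (Tm.rename Nat.succ X) = Tm.rename (· + (b+1)) X := by
            intro X b
            rw [Tm.rename_rename]
            exact Tm.rename_congr (fun n => by omega) X
          rw [e, e] at hPar
          simp only [Hd.plug, Hd.binders]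
          exact Par.pop c hPar
  | @push N₀ N₀' M₀ M₀' c hPN hPM ihN ihM =>
      intro H K N N' hT hfr hN
      cases H with
      | hole => simp [Hd.plug] at hT
      | pop d H₀ => simp [Hd.plug] at hT
      | push Q d H₀ =>
          simp only [Hd.plug, Tm.push.injEq] at hT
          obtain ⟨rfl, rfl, rfl⟩ := hT
          simp only [Hd.locs, List.mem_cons, not_or] at hfr
          obtain ⟨had, hfr₀⟩ := hfr
          obtain ⟨H₀', K', rfl, hfr', hPar⟩ := ihM H₀ K N N' rfl hfr₀ hN
          refine ⟨Hd.push N₀' c H₀', K', rfl, by simp only [Hd.locs, List.mem_cons, not_or]; exact ⟨had, hfr'⟩, ?_⟩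
          simp only [Hd.plug, Hd.binders]
          exact Par.push c hPN hPar
  | @beta P P' M₀ Y c G hPP hPM hcG ihP ihM =>
      intro H K N N' hT hfr hN
      cases H with
      | hole => simp [Hd.plug] at hT
      | pop d H₀ => simp [Hd.plug] at hT
      | push Q d H₀ =>
          simp only [Hd.plug, Tm.push.injEq] at hT
          obtain ⟨rfl, rfl, rfl⟩ := hT
          simp only [Hd.locs, List.mem_cons, not_or] at hfr
          obtain ⟨hac, hfr₀⟩ := hfr
          obtain ⟨Ha, Ka, hEq, hfrA, hPar⟩ := ihM H₀ K N N' rfl hfr₀ hN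
          rcases Hd.decomp_two hac Ha G Ka Y hEq.symm hfrA hcG with
            ⟨G₂, rfl, rfl⟩ | ⟨G₂, rfl, rfl⟩
          · -- case A : G = happ Ha (pop a G₂), Ka = G₂.plug (pop c Y)
            simp only [Hd.locs_happ, List.mem_append, Hd.locs, List.mem_cons, not_or] at hcG
            obtain ⟨hcHa, hca, hcG₂⟩ := hcG
            refine ⟨Ha, G₂.plug (Tm.subst1
                (Tm.rename (· + (Hd.happ Ha (Hd.pop a G₂)).binders) P') Y),
              by rw [Hd.plug_happ]; rfl, hfrA, ?_⟩
            have e1 : Tm.subst1 (Tm.rename (· + Ha.binders) N') (G₂.plug (Tm.pop c Y))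
                = (Hd.substH (Tm.sub1 (Tm.rename (· + Ha.binders) N')) G₂).plug
                    (Tm.pop c (Tm.subst
                      (Tm.liftS^[G₂.binders + 1] (Tm.sub1 (Tm.rename (· + Ha.binders) N'))) Y)) := by
              rw [Tm.subst1_eq, Hd.plug_subst]
              congr 1
              simp [Tm.subst, Function.iterate_succ_apply' Tm.liftS]
            rw [e1, ← Hd.plug_happ] at hPar
            have hfrC : c ∉ (Hd.happ Ha (Hd.substH (Tm.sub1 (Tm.rename (· + Ha.binders) N')) G₂)).locs := by
              simp only [Hd.locs_happ, Hd.locs_substH, List.mem_append, not_or]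
              exact ⟨hcHa, hcG₂⟩
            have hb := Par.beta c _ hPP hPar hfrC
            simp only [Hd.binders_happ, Hd.binders_substH] at hb
            simp only [Hd.plug, Hd.binders]
            have e2 : Tm.subst1 (Tm.rename (· + Ha.binders) N')
                  (G₂.plug (Tm.subst1
                    (Tm.rename (· + (Hd.happ Ha (Hd.pop a G₂)).binders) P') Y))
                = (Hd.substH (Tm.sub1 (Tm.rename (· + Ha.binders) N')) G₂).plug
                    (Tm.subst1 (Tm.rename (· + (Ha.binders + G₂.binders)) P')
                      (Tm.subst (Tm.liftS^[G₂.binders + 1]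
                        (Tm.sub1 (Tm.rename (· + Ha.binders) N'))) Y)) := by
              rw [Tm.subst1_eq, Hd.plug_subst]
              congr 1
              rw [show Tm.rename (· + (Hd.happ Ha (Hd.pop a G₂)).binders) P'
                  = Tm.rename (fun n => n + (Ha.binders + 1 + G₂.binders)) P' from
                Tm.rename_congr (fun n => by
                  simp only [Hd.binders_happ, Hd.binders]; omega) P']
              have := Tm.fire_subst (Tm.rename (· + Ha.binders) N') P' Y Ha.binders G₂.binders
              rw [this]
            rw [e2, ← Hd.plug_happ]
            exact hb
          · -- case B : Ha = happ G (pop c G₂), Y = G₂.plug (pop a Ka)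
            simp only [Hd.locs_happ, List.mem_append, Hd.locs, List.mem_cons, not_or] at hfrA
            obtain ⟨haG, hac', haG₂⟩ := hfrA
            have e1 : Tm.subst1 (Tm.rename (· + G.binders) P') (G₂.plug (Tm.pop a Ka))
                = (Hd.substH (Tm.sub1 (Tm.rename (· + G.binders) P')) G₂).plug
                    (Tm.pop a (Tm.subst
                      (Tm.liftS^[G₂.binders + 1] (Tm.sub1 (Tm.rename (· + G.binders) P'))) Ka)) := by
              rw [Tm.subst1_eq, Hd.plug_subst]
              congr 1
              simp [Tm.subst, Function.iterate_succ_apply' Tm.liftS]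
            refine ⟨Hd.happ G (Hd.substH (Tm.sub1 (Tm.rename (· + G.binders) P')) G₂),
              Tm.subst (Tm.liftS^[G₂.binders + 1] (Tm.sub1 (Tm.rename (· + G.binders) P'))) Ka,
              by rw [e1, ← Hd.plug_happ], ?_, ?_⟩
            · simp only [Hd.locs_happ, Hd.locs_substH, List.mem_append, not_or]
              exact ⟨haG, haG₂⟩
            · rw [Hd.plug_happ] at hPar
              simp only [Hd.plug] at hPar
              have hb := Par.beta c G hPP hPar hcG
              simp only [Hd.plug, Hd.binders]
              have e2 : Tm.subst1 (Tm.rename (· + G.binders) P')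
                    (G₂.plug (Tm.subst1
                      (Tm.rename (· + (Hd.happ G (Hd.pop c G₂)).binders) N') Ka))
                  = (Hd.substH (Tm.sub1 (Tm.rename (· + G.binders) P')) G₂).plug
                      (Tm.subst1 (Tm.rename (· + (G.binders + G₂.binders)) N')
                        (Tm.subst (Tm.liftS^[G₂.binders + 1]
                          (Tm.sub1 (Tm.rename (· + G.binders) P'))) Ka)) := by
                rw [Tm.subst1_eq, Hd.plug_subst]
                congr 1
                rw [show Tm.rename (· + (Hd.happ G (Hd.pop c G₂)).binders) N'
                    = Tm.rename (fun n => n + (G.binders + 1 + G₂.binders)) N' from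
                  Tm.rename_congr (fun n => by
                    simp only [Hd.binders_happ, Hd.binders]; omega) N']
                have := Tm.fire_subst (Tm.rename (· + G.binders) P') N' Ka G.binders G₂.binders
                rw [this]
              rw [e2] at hb
              rw [← Hd.plug_happ] at hb
              simp only [Hd.binders_happ, Hd.binders_substH]
              exact hb

end Par

namespace Par

variable {A : Type}

theorem diamond : ∀ {M X : Tm A}, Par M X → ∀ {Y : Tm A}, Par M Y →
    ∃ Z, Par X Z ∧ Par Y Z := by
  intro M X h
  induction h with
  | star =>
      intro Y hY
      cases hY
      exact ⟨Tm.star, Par.star, Par.star⟩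
  | var n hM ih =>
      intro Y hY
      cases hY with
      | var _ hM₂ =>
          obtain ⟨Z, h1, h2⟩ := ih hM₂
          exact ⟨Tm.var n Z, Par.var n h1, Par.var n h2⟩
  | pop c hM ih =>
      intro Y hY
      cases hY with
      | pop _ hM₂ =>
          obtain ⟨Z, h1, h2⟩ := ih hM₂
          exact ⟨Tm.pop c Z, Par.pop c h1, Par.pop c h2⟩
  | @push N N₁ M₀ M₁ c hN hM ihN ihM =>
      intro Y hY
      cases hY with
      | push _ hN₂ hM₂ =>
          obtain ⟨N₃, h13, h23⟩ := ihN hN₂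
          obtain ⟨M₃, g13, g23⟩ := ihM hM₂
          exact ⟨Tm.push N₃ c M₃, Par.push c h13 g13, Par.push c h23 g23⟩
      | @beta _ N₂ _ K₂ _ H₂ hN₂ hM₂ hfr₂ =>
          obtain ⟨N₃, h13, h23⟩ := ihN hN₂
          obtain ⟨Z₀, hZ₁, hZ₂⟩ := ihM hM₂
          obtain ⟨H', K', rfl, hfr', hPar⟩ := fire hZ₂ H₂ K₂ N₂ N₃ rfl hfr₂ h23
          exact ⟨H'.plug (Tm.subst1 (Tm.rename (· + H'.binders) N₃) K'),
            Par.beta c H' h13 hZ₁ hfr', hPar⟩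
  | @beta N N₁ M₀ K₁ c H₁ hN hM hfr ihN ihM =>
      intro Y hY
      cases hY with
      | push _ hN₂ hM₂ =>
          obtain ⟨N₃, h13, h23⟩ := ihN hN₂
          obtain ⟨Z₀, hZ₁, hZ₂⟩ := ihM hM₂
          obtain ⟨H', K', rfl, hfr', hPar⟩ := fire hZ₁ H₁ K₁ N₁ N₃ rfl hfr h13
          exact ⟨H'.plug (Tm.subst1 (Tm.rename (· + H'.binders) N₃) K'),
            hPar, Par.beta c H' h23 hZ₂ hfr'⟩
      | @beta _ N₂ _ K₂ _ H₂ hN₂ hM₂ hfr₂ =>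
          obtain ⟨N₃, h13, h23⟩ := ihN hN₂
          obtain ⟨Z₀, hZ₁, hZ₂⟩ := ihM hM₂
          obtain ⟨Ha, Ka, rfl, hfra, hPar1⟩ := fire hZ₁ H₁ K₁ N₁ N₃ rfl hfr h13
          obtain ⟨Hb, Kb, hE, hfrb, hPar2⟩ := fire hZ₂ H₂ K₂ N₂ N₃ rfl hfr₂ h23
          obtain ⟨rfl, rfl⟩ := Hd.decomp_unique Ha Hb Ka Kb hE hfra hfrb
          exact ⟨_, hPar1, hPar2⟩

theorem of_step {M N : Tm A} (h : Step M N) : Par M N := by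
  induction h with
  | beta N a H M hfr => exact Par.beta a H (Par.refl N) (Par.refl _) hfr
  | var n _ ih => exact Par.var n ih
  | pushL N a _ ih => exact Par.push a (Par.refl N) ih
  | pushArg a M _ ih => exact Par.push a ih (Par.refl M)
  | pop a _ ih => exact Par.pop a ih

theorem to_steps {M N : Tm A} (h : Par M N) : Relation.ReflTransGen Step M N := by
  induction h with
  | star => exact Relation.ReflTransGen.refl
  | var n _ ih => exact Relation.ReflTransGen.lift (Tm.var n) (fun _ _ h => Step.var n h) _ _ ih
  | @push N N' M M' a _ _ ihN ihM =>
      exact (Relation.ReflTransGen.lift (fun X => Tm.push X a M)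
          (fun _ _ h => Step.pushArg a M h) _ _ ihN).trans
        (Relation.ReflTransGen.lift (fun X => Tm.push N' a X)
          (fun _ _ h => Step.pushL N' a h) _ _ ihM)
  | pop a _ ih => exact Relation.ReflTransGen.lift (Tm.pop a) (fun _ _ h => Step.pop a h) _ _ ih
  | @beta N N' M K a H _ _ hfr ihN ihM =>
      refine ((Relation.ReflTransGen.lift (fun X => Tm.push X a M)
          (fun _ _ h => Step.pushArg a M h) _ _ ihN).trans
        (Relation.ReflTransGen.lift (fun X => Tm.push N' a X)
          (fun _ _ h => Step.pushL N' a h) _ _ ihM)).trans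
        (Relation.ReflTransGen.single ?_)
      exact Step.beta N' a H K hfr

end Par

/-- Confluence of β-reduction for the FMC. -/
theorem fmc_confluence {A : Type} (M N P : Tm A)
    (hN : Relation.ReflTransGen Step M N) (hP : Relation.ReflTransGen Step M P) :
    ∃ Q : Tm A, Relation.ReflTransGen Step N Q ∧ Relation.ReflTransGen Step P Q := by
  have key : ∀ (a b c : Tm A), Par a b → Par a c →
      ∃ d, Relation.ReflGen Par b d ∧ Relation.ReflTransGen Par c d := by
    intro a b c h1 h2
    obtain ⟨d, hb, hc⟩ := Par.diamond h1 h2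
    exact ⟨d, Relation.ReflGen.single hb, Relation.ReflTransGen.single hc⟩
  have mono : ∀ {X Y : Tm A}, Relation.ReflTransGen Step X Y → Relation.ReflTransGen Par X Y := by
    intro X Y h
    exact Relation.ReflTransGen.mono (fun _ _ hs => Par.of_step hs) _ _ h
  have conv : ∀ {X Y : Tm A}, Relation.ReflTransGen Par X Y → Relation.ReflTransGen Step X Y := by
    intro X Y h
    induction h with
    | refl => exact Relation.ReflTransGen.refl
    | tail _ hstep ih => exact ih.trans hstep.to_steps
  obtain ⟨Q, h1, h2⟩ := Relation.church_rosser key (mono hN) (mono hP)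
  exact ⟨Q, conv h1, conv h2⟩
end

section
/- Expansion for sequential types: if Γ ⊢ M : rev(ρ⃗) ⟹ σ⃗ then for every type vector υ⃗, Γ ⊢ M : rev(ρ⃗) rev(υ⃗) ⟹ υ⃗ σ⃗. -/
/-- Terms of the sequential λ-calculus in de Bruijn representation
(so terms are automatically identified up to α-equivalence):
nil `*`, variable prefix `x.M`, push/application `[N].M`,
and pop/abstraction `<x>.M`. -/
inductive STm : Type
  | star : STm
  | var  : Nat → STm → STm
  | push : STm → STm → STm
  | pop  : STm → STm

namespace STm

/-- Lifting of a renaming under a binder. -/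
def liftF (f : Nat → Nat) : Nat → Nat
  | 0 => 0
  | n+1 => f n + 1

/-- Renaming of de Bruijn indices. -/
def rename (f : Nat → Nat) : STm → STm
  | star => star
  | var n M => var (f n) (rename f M)
  | push N M => push (rename f N) (rename f M)
  | pop M => pop (rename (liftF f) M)

/-- Capture-avoiding composition `N ; M`. -/
def comp : STm → STm → STm
  | star, P => P
  | var n N, P => var n (comp N P)
  | push Q N, P => push Q (comp N P)
  | pop N, P => pop (comp N (rename Nat.succ P))

/-- Lifting of a substitution under a binder. -/
def liftS (σ : Nat → STm) : Nat → STm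
  | 0 => var 0 star
  | n+1 => rename Nat.succ (σ n)

/-- Capture-avoiding simultaneous substitution; note
`{N/x}(x.M) = N ; {N/x}M`. -/
def subst (σ : Nat → STm) : STm → STm
  | star => star
  | var n M => comp (σ n) (subst σ M)
  | push N M => push (subst σ N) (subst σ M)
  | pop M => pop (subst (liftS σ) M)

/-- Capture-avoiding substitution `{N/x}M` of `N` for the variable bound
immediately outside `M`. -/
def subst1 (N : STm) : STm → STm :=
  subst (fun n => match n with | 0 => N | n+1 => var n star)

end STm

/-- Machine states: a stack of terms (written bottom-first, so the top
element is the last element of the list) together with a term. -/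
abbrev SState := List STm × STm

/-- The transitions of the sequential stack machine:
`(S, [N].M) → (S·N, M)` and `(S·N, <x>.M) → (S, {N/x}M)`. -/
inductive SMStep : SState → SState → Prop
  | push (S : List STm) (N M : STm) : SMStep (S, .push N M) (S ++ [N], M)
  | pop (S : List STm) (N M : STm) : SMStep (S ++ [N], .pop M) (S, STm.subst1 N M)

/-- A run of the sequential machine: a finite sequence of transitions. -/
def SRun : SState → SState → Prop := Relation.ReflTransGen SMStep

/-- Sequential types `ρ_n…ρ_1 ⟹ τ_1…τ_m`: an implication between two
finite vectors of sequential types. The first list is the input vector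
as written (i.e. `arr (rev ρ⃗) τ⃗` represents `rev(ρ⃗) ⟹ τ⃗`). -/
inductive STy : Type
  | arr : List STy → List STy → STy

/-- Typing judgments `Γ ⊢ M : τ` of the sequential λ-calculus, with the
context `Γ` a finite map from (de Bruijn) variables to types, given as a
list. -/
inductive Typing : List STy → STm → STy → Prop
  | star (Γ : List STy) (τs : List STy) :
      Typing Γ .star (.arr τs.reverse τs)
  | var (Γ : List STy) (n : Nat) (M : STm) (ρs σs τs υs : List STy) :
      Γ[n]? = some (.arr ρs.reverse σs) →
      Typing Γ M (.arr (σs.reverse ++ τs.reverse) υs) →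
      Typing Γ (.var n M) (.arr (ρs.reverse ++ τs.reverse) υs)
  | abs (Γ : List STy) (M : STm) (ρ : STy) (σs τs : List STy) :
      Typing (ρ :: Γ) M (.arr σs.reverse τs) →
      Typing Γ (.pop M) (.arr (ρ :: σs.reverse) τs)
  | app (Γ : List STy) (N M : STm) (ρ : STy) (σs τs : List STy) :
      Typing Γ N ρ →
      Typing Γ M (.arr (ρ :: σs.reverse) τs) →
      Typing Γ (.push N M) (.arr σs.reverse τs)


theorem seq_expansion_aux (Γ : List STy) (M : STm) (τ : STy)
    (hM : Typing Γ M τ) : ∀ (ρr σs υs : List STy), τ = .arr ρr σs →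
    Typing Γ M (.arr (ρr ++ υs.reverse) (υs ++ σs)) := by
  induction hM with
  | star Γ τs =>
    rintro ρr σs' υs ⟨rfl, rfl⟩
    have := Typing.star Γ (υs ++ τs)
    simpa [List.reverse_append] using this
  | var Γ n M ρs σs τs υs h _ ih =>
    rintro ρr σs' us ⟨rfl, rfl⟩
    have h2 := ih (σs.reverse ++ τs.reverse) υs (us) rfl
    have := Typing.var Γ n M ρs σs (us ++ τs) (us ++ υs) h
      (by simpa [List.reverse_append, List.append_assoc] using h2)
    simpa [List.reverse_append, List.append_assoc] using this
  | abs Γ M ρ σs τs _ ih =>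
    rintro ρr σs' us ⟨rfl, rfl⟩
    have h2 := ih σs.reverse τs us rfl
    have := Typing.abs Γ M ρ (us ++ σs) (us ++ τs)
      (by simpa [List.reverse_append] using h2)
    simpa [List.reverse_append, List.append_assoc] using this
  | app Γ N M ρ σs τs hN _ _ ih =>
    rintro ρr σs' us ⟨rfl, rfl⟩
    have h2 := ih (ρ :: σs.reverse) τs us rfl
    have := Typing.app Γ N M ρ (us ++ σs) (us ++ τs) hN
      (by simpa [List.reverse_append, List.append_assoc] using h2)
    simpa [List.reverse_append, List.append_assoc] using this

/-- Expansion: if `Γ ⊢ M : rev(ρ⃗) ⟹ σ⃗` then for every type vector `υ⃗`,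
`Γ ⊢ M : rev(ρ⃗) rev(υ⃗) ⟹ υ⃗ σ⃗`. -/
theorem seq_expansion (Γ : List STy) (M : STm) (ρs σs : List STy)
    (hM : Typing Γ M (.arr ρs.reverse σs)) (υs : List STy) :
    Typing Γ M (.arr (ρs.reverse ++ υs.reverse) (υs ++ σs)) := by
  exact seq_expansion_aux Γ M _ hM ρs.reverse σs υs rfl
end
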